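/- The left semi-tensor product is associative: for any real matrices A, B, C of arbitrary (finite) sizes, (A⋉B)⋉C = A⋉(B⋉C). -/

import Mathlib

def kron {m n p q : ℕ} (A : Matrix (Fin m) (Fin n) ℝ) (B : Matrix (Fin p) (Fin q) ℝ) :
    Matrix (Fin (m * p)) (Fin (n * q)) ℝ :=
  Matrix.reindex finProdFinEquiv finProdFinEquiv (Matrix.kroneckerMap (· * ·) A B)

def castM {m n m' n' : ℕ} (hm : m = m') (hn : n = n') (A : Matrix (Fin m) (Fin n) ℝ) :
    Matrix (Fin m') (Fin n') ℝ :=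
  Matrix.reindex (finCongr hm) (finCongr hn) A

def stp {m n p q : ℕ} (A : Matrix (Fin m) (Fin n) ℝ) (B : Matrix (Fin p) (Fin q) ℝ) :
    Matrix (Fin (m * (Nat.lcm n p / n))) (Fin (q * (Nat.lcm n p / p))) ℝ :=
  castM rfl (Nat.mul_div_cancel' (Nat.dvd_lcm_left n p))
      (kron A (1 : Matrix (Fin (Nat.lcm n p / n)) (Fin (Nat.lcm n p / n)) ℝ)) *
    castM (Nat.mul_div_cancel' (Nat.dvd_lcm_right n p)) rfl
      (kron B (1 : Matrix (Fin (Nat.lcm n p / p)) (Fin (Nat.lcm n p / p)) ℝ))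

lemma castM_rfl {m n : ℕ} (A : Matrix (Fin m) (Fin n) ℝ) : castM rfl rfl A = A := by
  simp [castM]

lemma castM_heq {m n m' n' : ℕ} (hm : m = m') (hn : n = n') (A : Matrix (Fin m) (Fin n) ℝ) :
    HEq (castM hm hn A) A := by
  subst hm; subst hn; rw [castM_rfl]

lemma hmul {m n k m' n' k' : ℕ} (h1 : m = m') (h2 : n = n') (h3 : k = k')
    {A : Matrix (Fin m) (Fin n) ℝ} {A' : Matrix (Fin m') (Fin n') ℝ}
    {B : Matrix (Fin n) (Fin k) ℝ} {B' : Matrix (Fin n') (Fin k') ℝ}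
    (hA : HEq A A') (hB : HEq B B') : HEq (A * B) (A' * B') := by
  subst h1; subst h2; subst h3; rw [eq_of_heq hA, eq_of_heq hB]

lemma hkron_one {m n d d' : ℕ} (h : d = d') (A : Matrix (Fin m) (Fin n) ℝ) :
    HEq (kron A (1 : Matrix (Fin d) (Fin d) ℝ)) (kron A (1 : Matrix (Fin d') (Fin d') ℝ)) := by
  subst h; rfl

lemma reindex_mul {l m n : Type*} [Fintype m] [Fintype n] {l' m' n' : Type*}
    [Fintype m'] [DecidableEq m] [DecidableEq m']
    (e1 : l ≃ l') (e2 : m ≃ m') (e3 : n ≃ n')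
    (M : Matrix l m ℝ) (N : Matrix m n ℝ) :
    Matrix.reindex e1 e3 (M * N) = Matrix.reindex e1 e2 M * Matrix.reindex e2 e3 N := by
  simp only [Matrix.reindex_apply]
  rw [Matrix.submatrix_mul_equiv M N _ e2.symm _]

lemma kron_mul {m n k p q r : ℕ} (A : Matrix (Fin m) (Fin n) ℝ) (B : Matrix (Fin n) (Fin k) ℝ)
    (C : Matrix (Fin p) (Fin q) ℝ) (D : Matrix (Fin q) (Fin r) ℝ) :
    kron (A * B) (C * D) = kron A C * kron B D := by
  unfold kron
  rw [Matrix.mul_kronecker_mul, reindex_mul finProdFinEquiv finProdFinEquiv finProdFinEquiv]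

lemma kron_one_one {a b : ℕ} :
    kron (1 : Matrix (Fin a) (Fin a) ℝ) (1 : Matrix (Fin b) (Fin b) ℝ) = 1 := by
  simp [kron, Matrix.one_kronecker_one]

lemma kron_mul_one {m n k d : ℕ} (M : Matrix (Fin m) (Fin n) ℝ) (N : Matrix (Fin n) (Fin k) ℝ) :
    kron (M * N) (1 : Matrix (Fin d) (Fin d) ℝ)
      = kron M (1 : Matrix (Fin d) (Fin d) ℝ) * kron N (1 : Matrix (Fin d) (Fin d) ℝ) := by
  conv_lhs => rw [show (1 : Matrix (Fin d) (Fin d) ℝ) = 1 * 1 from (one_mul 1).symm]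
  exact kron_mul M N 1 1

lemma fpfe_assoc {m p r : ℕ} (a : Fin m) (b : Fin p) (c : Fin r) :
    (finCongr (mul_assoc m p r) (finProdFinEquiv (finProdFinEquiv (a, b), c)) : Fin (m * (p * r)))
      = finProdFinEquiv (a, finProdFinEquiv (b, c)) := by
  apply Fin.ext
  simp [finProdFinEquiv_apply_val]
  ring

lemma fpfe_assoc' {m p r : ℕ} (a : Fin m) (b : Fin p) (c : Fin r) :
    finProdFinEquiv.symm (Fin.cast (mul_assoc m p r) (finProdFinEquiv (finProdFinEquiv (a, b), c)))
      = (a, finProdFinEquiv (b, c)) := by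
  rw [← finCongr_apply, fpfe_assoc, Equiv.symm_apply_apply]

lemma kron_assoc {m n p q r s : ℕ} (A : Matrix (Fin m) (Fin n) ℝ) (B : Matrix (Fin p) (Fin q) ℝ)
    (C : Matrix (Fin r) (Fin s) ℝ) :
    kron (kron A B) C
      = castM (mul_assoc m p r).symm (mul_assoc n q s).symm (kron A (kron B C)) := by
  ext I J
  obtain ⟨⟨ab, c⟩, rfl⟩ := finProdFinEquiv.surjective I
  obtain ⟨⟨a, b⟩, rfl⟩ := finProdFinEquiv.surjective ab
  obtain ⟨⟨de, f⟩, rfl⟩ := finProdFinEquiv.surjective J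
  obtain ⟨⟨d, e⟩, rfl⟩ := finProdFinEquiv.surjective de
  simp only [kron, castM, Matrix.reindex_apply, Matrix.submatrix_apply,
    ← fpfe_assoc, finCongr_symm, finCongr_apply, Fin.cast_cast, Fin.cast_eq_self,
    Equiv.symm_apply_apply, Matrix.kroneckerMap_apply]
  rw [fpfe_assoc', fpfe_assoc']
  simp [Equiv.symm_apply_apply]
  ring

lemma kron_kron_one {m n d k : ℕ} (A : Matrix (Fin m) (Fin n) ℝ) :
    kron (kron A (1 : Matrix (Fin d) (Fin d) ℝ)) (1 : Matrix (Fin k) (Fin k) ℝ)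
      = castM (mul_assoc m d k).symm (mul_assoc n d k).symm
          (kron A (1 : Matrix (Fin (d * k)) (Fin (d * k)) ℝ)) := by
  rw [kron_assoc, kron_one_one]

lemma kron_castM_left {m n m' n' p q : ℕ} (h1 : m = m') (h2 : n = n')
    (A : Matrix (Fin m) (Fin n) ℝ) (B : Matrix (Fin p) (Fin q) ℝ) :
    kron (castM h1 h2 A) B = castM (by rw [h1]) (by rw [h2]) (kron A B) := by
  subst h1; subst h2; rw [castM_rfl, castM_rfl]

theorem stp_assoc (m n p q r s : ℕ) (hm : 0 < m) (hn : 0 < n) (hp : 0 < p)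
    (hq : 0 < q) (hr : 0 < r) (hs : 0 < s)
    (A : Matrix (Fin m) (Fin n) ℝ) (B : Matrix (Fin p) (Fin q) ℝ)
    (C : Matrix (Fin r) (Fin s) ℝ) :
    HEq (stp (stp A B) C) (stp A (stp B C)) := by
  have hdiv : ∀ {x y k : ℕ}, 0 < k → k * x = y → x = y / k := by
    intro x y k hk h; subst h; rw [Nat.mul_div_cancel_left _ hk]
  set t1 := Nat.lcm n p with ht1d
  set α := t1 / n with hαd
  set β := t1 / p with hβd
  set q1 := q * β with hq1d
  set t2 := Nat.lcm q1 r with ht2d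
  set u := t2 / q1 with hud
  set v := t2 / r with hvd
  set t3 := Nat.lcm q r with ht3d
  set γ := t3 / q with hγd
  set δ := t3 / r with hδd
  set p1 := p * γ with hp1d
  set t4 := Nat.lcm n p1 with ht4d
  set w := t4 / n with hwd
  set x := t4 / p1 with hxd
  set L := Nat.lcm (n * q) (Nat.lcm (p * q) (p * r)) with hLd
  set a := L / (n * q) with had
  set b := L / (p * q) with hbd
  set c := L / (p * r) with hcd
  -- basic exact-division facts
  have hα : n * α = t1 := Nat.mul_div_cancel' (Nat.dvd_lcm_left n p)
  have hβ : p * β = t1 := Nat.mul_div_cancel' (Nat.dvd_lcm_right n p)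
  have hu : q1 * u = t2 := Nat.mul_div_cancel' (Nat.dvd_lcm_left q1 r)
  have hv : r * v = t2 := Nat.mul_div_cancel' (Nat.dvd_lcm_right q1 r)
  have hγ : q * γ = t3 := Nat.mul_div_cancel' (Nat.dvd_lcm_left q r)
  have hδ : r * δ = t3 := Nat.mul_div_cancel' (Nat.dvd_lcm_right q r)
  have hw : n * w = t4 := Nat.mul_div_cancel' (Nat.dvd_lcm_left n p1)
  have hx : p1 * x = t4 := Nat.mul_div_cancel' (Nat.dvd_lcm_right n p1)
  -- key lcm identities
  have hpq1 : p * q1 = q * t1 := by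
    rw [hq1d, show p * (q * β) = q * (p * β) from by ring, hβ]
  have hqt1 : q * t1 = Nat.lcm (n * q) (p * q) := by
    rw [ht1d, show q * Nat.lcm n p = Nat.lcm (q * n) (q * p) from (Nat.lcm_mul_left _ _ _).symm,
      mul_comm q n, mul_comm q p]
  have hpt2 : p * t2 = L := by
    rw [ht2d, show p * Nat.lcm q1 r = Nat.lcm (p * q1) (p * r) from (Nat.lcm_mul_left _ _ _).symm,
      hpq1, hqt1, Nat.lcm_assoc]
  have hqp1 : q * p1 = p * t3 := by
    rw [hp1d, show q * (p * γ) = p * (q * γ) from by ring, hγ]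
  have hpt3 : p * t3 = Nat.lcm (p * q) (p * r) := by
    rw [ht3d]; exact (Nat.lcm_mul_left _ _ _).symm
  have hqt4 : q * t4 = L := by
    rw [ht4d, show q * Nat.lcm n p1 = Nat.lcm (q * n) (q * p1) from (Nat.lcm_mul_left _ _ _).symm,
      hqp1, hpt3, mul_comm q n]
  -- products hitting L
  have hqt1u : q * (t1 * u) = L := by
    rw [show q * (t1 * u) = (q * t1) * u from by ring, ← hpq1,
      show p * q1 * u = p * (q1 * u) from by ring, hu, hpt2]
  have hpt3x : p * (t3 * x) = L := by
    rw [show p * (t3 * x) = (p * t3) * x from by ring, ← hqp1,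
      show q * p1 * x = q * (p1 * x) from by ring, hx, hqt4]
  -- the canonical multipliers
  have NL1 : α * u = a := by
    refine hdiv (by positivity) ?_
    rw [show n * q * (α * u) = q * ((n * α) * u) from by ring, hα, hqt1u]
  have NL2 : β * u = b := by
    refine hdiv (by positivity) ?_
    rw [show p * q * (β * u) = q * ((p * β) * u) from by ring, hβ, hqt1u]
  have NL3 : v = c := by
    refine hdiv (by positivity) ?_
    rw [show p * r * v = p * (r * v) from by ring, hv, hpt2]
  have NR1 : w = a := by
    refine hdiv (by positivity) ?_
    rw [show n * q * w = q * (n * w) from by ring, hw, hqt4]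
  have NR2 : γ * x = b := by
    refine hdiv (by positivity) ?_
    rw [show p * q * (γ * x) = p * ((q * γ) * x) from by ring, hγ, hpt3x]
  have NR3 : δ * x = c := by
    refine hdiv (by positivity) ?_
    rw [show p * r * (δ * x) = p * ((r * δ) * x) from by ring, hδ, hpt3x]
  have NL4 : t1 * u = L / q := hdiv hq hqt1u
  have NL5 : t2 = L / p := hdiv hp hpt2
  have NR4 : t4 = L / q := hdiv hq hqt4
  have NR6 : t3 * x = L / p := hdiv hp hpt3x
  have hq1u : q1 * u = L / p := by rw [hu, NL5]
  -- dimensions of the canonical middle matrix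
  have hna : n * a = L / q := by rw [← NL1, ← mul_assoc, hα, NL4]
  have hpb : p * b = L / q := by rw [← NL2, ← mul_assoc, hβ, NL4]
  have hqb : q * b = L / p := by rw [← NL2, ← mul_assoc, ← hq1d, hq1u]
  have hrc : r * c = L / p := by rw [← NL3, hv, NL5]
  -- the canonical middle matrix
  set G : Matrix (Fin (m * a)) (Fin (s * c)) ℝ :=
    castM rfl hna (kron A (1 : Matrix (Fin a) (Fin a) ℝ)) *
      castM hpb hqb (kron B (1 : Matrix (Fin b) (Fin b) ℝ)) *
      castM hrc rfl (kron C (1 : Matrix (Fin c) (Fin c) ℝ)) with hGd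
  have hL : HEq (stp (stp A B) C) G := by
    refine HEq.trans (heq_of_eq (rfl :
      stp (stp A B) C
        = castM rfl hu (kron (stp A B) (1 : Matrix (Fin u) (Fin u) ℝ)) *
            castM hv rfl (kron C (1 : Matrix (Fin v) (Fin v) ℝ)))) ?_
    rw [hGd]
    refine hmul (by show m * α * u = m * a; rw [mul_assoc, NL1])
      (show t2 = L / p from NL5) (by show s * v = s * c; rw [NL3]) ?_ ?_
    · refine (castM_heq _ _ _).trans ?_
      rw [show (stp A B)
          = castM rfl hα (kron A (1 : Matrix (Fin α) (Fin α) ℝ)) *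
              castM hβ rfl (kron B (1 : Matrix (Fin β) (Fin β) ℝ)) from rfl,
        kron_mul_one, kron_castM_left, kron_castM_left, kron_kron_one, kron_kron_one]
      refine hmul (by show m * α * u = m * a; rw [mul_assoc, NL1])
        (show t1 * u = L / q from NL4) (show q1 * u = L / p from hq1u) ?_ ?_
      · exact (castM_heq _ _ _).trans ((castM_heq _ _ _).trans
          ((hkron_one NL1 A).trans (castM_heq rfl hna _).symm))
      · exact (castM_heq _ _ _).trans ((castM_heq _ _ _).trans
          ((hkron_one NL2 B).trans (castM_heq hpb hqb _).symm))
    · exact (castM_heq _ _ _).trans ((hkron_one NL3 C).trans (castM_heq hrc rfl _).symm)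
  have hR : HEq (stp A (stp B C)) G := by
    refine HEq.trans (heq_of_eq (rfl :
      stp A (stp B C)
        = castM rfl hw (kron A (1 : Matrix (Fin w) (Fin w) ℝ)) *
            castM hx rfl (kron (stp B C) (1 : Matrix (Fin x) (Fin x) ℝ)))) ?_
    rw [hGd, Matrix.mul_assoc]
    refine hmul (by show m * w = m * a; rw [NR1]) (show t4 = L / q from NR4)
      (by show s * δ * x = s * c; rw [mul_assoc, NR3]) ?_ ?_
    · exact (castM_heq _ _ _).trans ((hkron_one NR1 A).trans (castM_heq rfl hna _).symm)
    · refine (castM_heq _ _ _).trans ?_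
      rw [show (stp B C)
          = castM rfl hγ (kron B (1 : Matrix (Fin γ) (Fin γ) ℝ)) *
              castM hδ rfl (kron C (1 : Matrix (Fin δ) (Fin δ) ℝ)) from rfl,
        kron_mul_one, kron_castM_left, kron_castM_left, kron_kron_one, kron_kron_one]
      refine hmul (by show p * γ * x = L / q; rw [mul_assoc, NR2, hpb])
        (show t3 * x = L / p from NR6) (by show s * δ * x = s * c; rw [mul_assoc, NR3]) ?_ ?_
      · exact (castM_heq _ _ _).trans ((castM_heq _ _ _).trans
          ((hkron_one NR2 B).trans (castM_heq hpb hqb _).symm))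
      · exact (castM_heq _ _ _).trans ((castM_heq _ _ _).trans
          ((hkron_one NR3 C).trans (castM_heq hrc rfl _).symm))
  exact hL.trans hR.symm
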